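/- Let h₁, h₂ ∈ ℍ with Re h₁ = Re h₂ = 0 and |h₁| = |h₂| = 1, and define the linear map f₁ on m by f₁(x, y, z) = (h₁x, h₂y, 0). Then the off-diagonal projection [f₁X, f₁²X]_m vanishes for all X ∈ m if and only if h₁ = −h₂. -/

import Mathlib

open Quaternion

namespace Sp3

/-- `M₁(x) ∈ sp(3)` has entry `x` in position `(1,2)`, `−x̄` in position `(2,1)`, zeros
elsewhere (indices `0,1,2` correspond to the paper's `1,2,3`). -/
noncomputable def M1 (x : ℍ[ℝ]) : Matrix (Fin 3) (Fin 3) ℍ[ℝ] :=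
  Matrix.single 0 1 x - Matrix.single 1 0 (star x)

/-- `M₂(y) ∈ sp(3)` has entry `y` in position `(1,3)`, `−ȳ` in position `(3,1)`. -/
noncomputable def M2 (y : ℍ[ℝ]) : Matrix (Fin 3) (Fin 3) ℍ[ℝ] :=
  Matrix.single 0 2 y - Matrix.single 2 0 (star y)

/-- `M₃(z) ∈ sp(3)` has entry `z` in position `(2,3)`, `−z̄` in position `(3,2)`. -/
noncomputable def M3 (z : ℍ[ℝ]) : Matrix (Fin 3) (Fin 3) ℍ[ℝ] :=
  Matrix.single 1 2 z - Matrix.single 2 1 (star z)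

/-- Membership in `h ⊂ sp(3)`: the diagonal matrices whose diagonal entries are purely
imaginary quaternions. -/
def InH (X : Matrix (Fin 3) (Fin 3) ℍ[ℝ]) : Prop :=
  (∀ i j : Fin 3, i ≠ j → X i j = 0) ∧ (∀ i : Fin 3, (X i i).re = 0)

/-- The element of `m = m₁ ⊕ m₂ ⊕ m₃` with coordinates `(x, y, z) ∈ ℍ³`. -/
noncomputable def Mm (v : ℍ[ℝ] × ℍ[ℝ] × ℍ[ℝ]) : Matrix (Fin 3) (Fin 3) ℍ[ℝ] :=
  M1 v.1 + M2 v.2.1 + M3 v.2.2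

/-- The off-diagonal part of `X`, i.e. the projection of `X ∈ sp(3)` onto `m` along `h`. -/
noncomputable def offDiag (X : Matrix (Fin 3) (Fin 3) ℍ[ℝ]) : Matrix (Fin 3) (Fin 3) ℍ[ℝ] :=
  Matrix.of fun i j => if i = j then 0 else X i j

end Sp3

open Sp3 in
private lemma sp3_sq_neg_one (h : ℍ[ℝ]) (hre : h.re = 0) (hn : ‖h‖ = 1) : h * h = -1 := by
  have hs : star h = -h := Quaternion.star_eq_neg.mpr hre
  have h1 : h * star h = ((Quaternion.normSq h : ℝ) : ℍ[ℝ]) := Quaternion.self_mul_star h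
  have hn2 : Quaternion.normSq h = 1 := by
    rw [Quaternion.normSq_eq_norm_mul_self, hn]; ring
  rw [hs, mul_neg, hn2] at h1
  have h2 : -(h * h) = 1 := by simpa using h1
  rw [neg_eq_iff_eq_neg] at h2; exact h2

set_option maxHeartbeats 1600000 in
open Sp3 in
private lemma sp3_key (a b c d : ℍ[ℝ]) :
    offDiag ⁅Mm (a,b,0), Mm (c,d,0)⁆ = M3 (star c * b - star a * d) := by
  have hbr : ⁅Mm (a,b,0), Mm (c,d,0)⁆ = Mm (a,b,0) * Mm (c,d,0) - Mm (c,d,0) * Mm (a,b,0) :=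
    rfl
  apply Matrix.ext; intro i j
  rw [hbr]
  fin_cases i <;> fin_cases j <;>
    simp [Mm, M1, M2, M3, offDiag, Matrix.mul_apply, Fin.sum_univ_three,
      Matrix.sub_apply, Matrix.add_apply, Matrix.single, mul_sub, sub_mul] <;> abel

open Sp3 in
private lemma sp3_M3_eq_zero {z : ℍ[ℝ]} (h : M3 z = 0) : z = 0 := by
  have := congrFun (congrFun h 1) 2
  simpa [M3, Matrix.single] using this

open Sp3 in
/-- let `h₁, h₂ ∈ ℍ` be purely imaginary unit quaternions and let `f₁` act
on `m` in coordinates by `f₁(x, y, z) = (h₁x, h₂y, 0)`.  Then the off-diagonal projection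
`[f₁X, f₁²X]_m` vanishes for all `X ∈ m` if and only if `h₁ = −h₂`. -/
theorem statement16 (h1 h2 : ℍ[ℝ]) (h1re : h1.re = 0) (h2re : h2.re = 0)
    (h1n : ‖h1‖ = 1) (h2n : ‖h2‖ = 1)
    (f : ℍ[ℝ] × ℍ[ℝ] × ℍ[ℝ] → ℍ[ℝ] × ℍ[ℝ] × ℍ[ℝ])
    (hf : ∀ v, f v = (h1 * v.1, h2 * v.2.1, 0)) :
    (∀ v : ℍ[ℝ] × ℍ[ℝ] × ℍ[ℝ], offDiag ⁅Mm (f v), Mm (f (f v))⁆ = 0) ↔ h1 = -h2 := by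
  have h1s : star h1 = -h1 := Quaternion.star_eq_neg.mpr h1re
  have h2s : star h2 = -h2 := Quaternion.star_eq_neg.mpr h2re
  have h1sq : h1 * h1 = -1 := sp3_sq_neg_one h1 h1re h1n
  have h2sq : h2 * h2 = -1 := sp3_sq_neg_one h2 h2re h2n
  have hff : ∀ v : ℍ[ℝ] × ℍ[ℝ] × ℍ[ℝ], f (f v) = (-v.1, -v.2.1, 0) := by
    intro v
    rw [hf, hf]
    simp [← mul_assoc, h1sq, h2sq]
  constructor
  · intro hall
    have h := hall (1, 1, 0)
    rw [hff, hf] at h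
    simp only at h
    rw [show ((h1 * (1:ℍ[ℝ]), h2 * (1:ℍ[ℝ]), (0:ℍ[ℝ]))) = (h1, h2, 0) by simp] at h
    rw [sp3_key] at h
    have hz := sp3_M3_eq_zero h
    simp only [star_neg, star_one, h1s] at hz
    have hz2 : -h2 - h1 = 0 := by
      rw [← hz]; noncomm_ring
    have := sub_eq_zero.mp hz2
    exact this.symm
  · intro heq v
    rw [hff, hf]
    rw [sp3_key]
    have hz : star (-v.1) * (h2 * v.2.1) - star (h1 * v.1) * -v.2.1 = 0 := by
      simp only [star_neg, star_mul, h1s, h2s, heq]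
      noncomm_ring
    rw [hz]
    simp [M3]
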